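/- Let x ∈ ℂ with x ≠ 0. Let V be a 4-dimensional ℂ-vector space and let f be an endomorphism of V whose matrix in some basis of V is diag(J(1,2), J(x,1), J(x⁻¹,1)). Then there is a basis of the 6-dimensional space ⋀²V in which the induced endomorphism ⋀²f has matrix diag(J(x,2), J(x⁻¹,2), J(1,1), J(1,1)). -/

import Mathlib

/-- The `n × n` Jordan block with eigenvalue `lam`: every diagonal entry is `lam` and every
entry directly above the diagonal is `1`. -/
def jordanBlock (lam : ℂ) (n : ℕ) : Matrix (Fin n) (Fin n) ℂ :=
  Matrix.of fun i j : Fin n =>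
    if (j : ℕ) = (i : ℕ) then lam else if (j : ℕ) = (i : ℕ) + 1 then 1 else 0

/-- The wedge `v ∧ w` as an element of the second exterior power `⋀[ℂ]^2 V`. -/
def wedge {V : Type*} [AddCommGroup V] [Module ℂ V] (v w : V) : ⋀[ℂ]^2 V :=
  ⟨ExteriorAlgebra.ι ℂ v * ExteriorAlgebra.ι ℂ w, by
    show _ ∈ LinearMap.range (ExteriorAlgebra.ι ℂ (M := V)) ^ 2
    rw [pow_two]
    exact Submodule.mul_mem_mul (LinearMap.mem_range_self _ v) (LinearMap.mem_range_self _ w)⟩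


namespace ExtSqAux
variable {V : Type*} [AddCommGroup V] [Module ℂ V]

lemma wedge_val (v w : V) : (wedge v w : ExteriorAlgebra ℂ V) =
    ExteriorAlgebra.ι ℂ v * ExteriorAlgebra.ι ℂ w := rfl

/-- wedge as a bilinear map -/
def wedgeL : V →ₗ[ℂ] V →ₗ[ℂ] (⋀[ℂ]^2 V : Submodule ℂ (ExteriorAlgebra ℂ V)) :=
  LinearMap.mk₂ ℂ wedge
    (fun u v w => by apply Subtype.ext; simp [wedge, add_mul])
    (fun r u w => by apply Subtype.ext; simp [wedge, smul_mul_assoc])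
    (fun u v w => by apply Subtype.ext; simp [wedge, mul_add])
    (fun r u w => by apply Subtype.ext; simp [wedge, mul_smul_comm])

lemma wedgeL_apply (v w : V) : wedgeL v w = wedge v w := rfl

@[simp] lemma wedge_add_left (u v w : V) : wedge (u + v) w = wedge u w + wedge v w := by
  rw [← wedgeL_apply, map_add]; rfl

@[simp] lemma wedge_add_right (u v w : V) : wedge u (v + w) = wedge u v + wedge u w := by
  rw [← wedgeL_apply, map_add]; rfl

@[simp] lemma wedge_smul_left (r : ℂ) (v w : V) : wedge (r • v) w = r • wedge v w := by
  rw [← wedgeL_apply, map_smul]; rfl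

@[simp] lemma wedge_smul_right (r : ℂ) (v w : V) : wedge v (r • w) = r • wedge v w := by
  rw [← wedgeL_apply, map_smul]; rfl

@[simp] lemma wedge_self (v : V) : wedge v v = 0 := by
  apply Subtype.ext
  simpa [wedge] using ExteriorAlgebra.ι_sq_zero v

lemma wedge_anticomm (v w : V) : wedge w v = - wedge v w := by
  have h := wedge_self (v + w)
  rw [wedge_add_left, wedge_add_right, wedge_add_right, wedge_self v, wedge_self w,
    zero_add, add_zero] at h
  exact eq_neg_of_add_eq_zero_right h

/-- alternating 2-form from two functionals -/
def altTwo (α β : V →ₗ[ℂ] ℂ) : V [⋀^Fin 2]→ₗ[ℂ] ℂ :=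
  (Matrix.detRowAlternating : (Fin 2 → ℂ) [⋀^Fin 2]→ₗ[ℂ] ℂ).compLinearMap
    (LinearMap.pi ![α, β])

lemma altTwo_apply (α β : V →ₗ[ℂ] ℂ) (v w : V) :
    altTwo α β ![v, w] = α v * β w - β v * α w := by
  show Matrix.det (Matrix.of fun i => (LinearMap.pi ![α, β]) (![v, w] i)) = _
  rw [Matrix.det_fin_two]
  simp [LinearMap.pi_apply]

noncomputable def phi (α β : V →ₗ[ℂ] ℂ) :
    (⋀[ℂ]^2 V : Submodule ℂ (ExteriorAlgebra ℂ V)) →ₗ[ℂ] ℂ :=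
  (ExteriorAlgebra.liftAlternating
    (fun n => match n with | 2 => altTwo α β | _ => 0)).comp (Submodule.subtype _)

lemma ιMulti_two (v : Fin 2 → V) :
    ExteriorAlgebra.ιMulti ℂ 2 v = ExteriorAlgebra.ι ℂ (v 0) * ExteriorAlgebra.ι ℂ (v 1) := by
  rw [ExteriorAlgebra.ιMulti_apply]
  simp [List.ofFn_succ]

@[simp] lemma phi_wedge (α β : V →ₗ[ℂ] ℂ) (v w : V) :
    phi α β (wedge v w) = α v * β w - β v * α w := by
  have h : (wedge v w : ExteriorAlgebra ℂ V) = ExteriorAlgebra.ιMulti ℂ 2 ![v, w] := by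
    rw [ιMulti_two]; rfl
  rw [phi]
  simp only [LinearMap.comp_apply, Submodule.subtype_apply, h,
    ExteriorAlgebra.liftAlternating_apply_ιMulti]
  exact altTwo_apply α β v w

end ExtSqAux

set_option maxHeartbeats 1000000 in
open ExtSqAux in
/-- Let `x ∈ ℂ` with `x ≠ 0`. If the matrix of the endomorphism `f` of the 4-dimensional ℂ-vector space `V` in some basis is diag(J(1,2), J(x,1), J(x⁻¹,1)), then in some basis of the 6-dimensional space ⋀²V the induced endomorphism ⋀²f (characterized by `v ∧ w ↦ f v ∧ f w`) has matrix diag(J(x,2), J(x⁻¹,2), J(1,1), J(1,1)). -/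
theorem exterior_square_jordan_J1_2_x_xinv (V : Type*) [AddCommGroup V] [Module ℂ V]
    (hdim : Module.finrank ℂ V = 4)
    (x : ℂ) (hx : x ≠ 0)
    (f : V →ₗ[ℂ] V)
    (B : Module.Basis (Fin 2 ⊕ (Fin 1 ⊕ Fin 1)) ℂ V)
    (hB : LinearMap.toMatrix B B f = Matrix.fromBlocks (jordanBlock 1 2) 0 0 (Matrix.fromBlocks (jordanBlock x 1) 0 0 (jordanBlock x⁻¹ 1)))
    (g : (⋀[ℂ]^2 V) →ₗ[ℂ] (⋀[ℂ]^2 V))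
    (hg : ∀ v w : V, g (wedge v w) = wedge (f v) (f w)) :
    ∃ C : Module.Basis (Fin 2 ⊕ (Fin 2 ⊕ (Fin 1 ⊕ Fin 1))) ℂ (⋀[ℂ]^2 V),
      LinearMap.toMatrix C C g = Matrix.fromBlocks (jordanBlock x 2) 0 0 (Matrix.fromBlocks (jordanBlock x⁻¹ 2) 0 0 (Matrix.fromBlocks (jordanBlock 1 1) 0 0 (jordanBlock 1 1))) := by
  classical
  classical
  -- action of f on the basis
  have hM : f = Matrix.toLin B B
      (Matrix.fromBlocks (jordanBlock 1 2) 0 0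
        (Matrix.fromBlocks (jordanBlock x 1) 0 0 (jordanBlock x⁻¹ 1))) := by
    rw [← hB, Matrix.toLin_toMatrix]
  have hf0 : f (B (Sum.inl 0)) = B (Sum.inl 0) := by
    rw [hM, Matrix.toLin_self]
    simp [Fintype.sum_sum_type, jordanBlock, Fin.sum_univ_two]
  have hf1 : f (B (Sum.inl 1)) = B (Sum.inl 0) + B (Sum.inl 1) := by
    rw [hM, Matrix.toLin_self]
    simp [Fintype.sum_sum_type, jordanBlock, Fin.sum_univ_two]
  have hf2 : f (B (Sum.inr (Sum.inl 0))) = x • B (Sum.inr (Sum.inl 0)) := by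
    rw [hM, Matrix.toLin_self]
    simp [Fintype.sum_sum_type, jordanBlock, Fin.sum_univ_two]
  have hf3 : f (B (Sum.inr (Sum.inr 0))) = x⁻¹ • B (Sum.inr (Sum.inr 0)) := by
    rw [hM, Matrix.toLin_self]
    simp [Fintype.sum_sum_type, jordanBlock, Fin.sum_univ_two]
  -- the candidate basis family of the exterior square
  set c : (Fin 2 ⊕ (Fin 2 ⊕ (Fin 1 ⊕ Fin 1))) → (⋀[ℂ]^2 V : Submodule ℂ (ExteriorAlgebra ℂ V)) :=
    Sum.elim
      ![wedge (B (Sum.inl 0)) (B (Sum.inr (Sum.inl 0))),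
        x⁻¹ • wedge (B (Sum.inl 1)) (B (Sum.inr (Sum.inl 0)))]
      (Sum.elim
        ![wedge (B (Sum.inl 0)) (B (Sum.inr (Sum.inr 0))),
          x • wedge (B (Sum.inl 1)) (B (Sum.inr (Sum.inr 0)))]
        (Sum.elim
          ![wedge (B (Sum.inl 0)) (B (Sum.inl 1))]
          ![wedge (B (Sum.inr (Sum.inl 0))) (B (Sum.inr (Sum.inr 0)))])) with hc
  -- images of the wedges under g
  have hg02 : g (wedge (B (Sum.inl 0)) (B (Sum.inr (Sum.inl 0))))
      = x • wedge (B (Sum.inl 0)) (B (Sum.inr (Sum.inl 0))) := by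
    rw [hg, hf0, hf2, wedge_smul_right]
  have hg12 : g (wedge (B (Sum.inl 1)) (B (Sum.inr (Sum.inl 0))))
      = x • wedge (B (Sum.inl 0)) (B (Sum.inr (Sum.inl 0)))
        + x • wedge (B (Sum.inl 1)) (B (Sum.inr (Sum.inl 0))) := by
    rw [hg, hf1, hf2]; simp
  have hg03 : g (wedge (B (Sum.inl 0)) (B (Sum.inr (Sum.inr 0))))
      = x⁻¹ • wedge (B (Sum.inl 0)) (B (Sum.inr (Sum.inr 0))) := by
    rw [hg, hf0, hf3, wedge_smul_right]
  have hg13 : g (wedge (B (Sum.inl 1)) (B (Sum.inr (Sum.inr 0))))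
      = x⁻¹ • wedge (B (Sum.inl 0)) (B (Sum.inr (Sum.inr 0)))
        + x⁻¹ • wedge (B (Sum.inl 1)) (B (Sum.inr (Sum.inr 0))) := by
    rw [hg, hf1, hf3]; simp
  have hg01 : g (wedge (B (Sum.inl 0)) (B (Sum.inl 1)))
      = wedge (B (Sum.inl 0)) (B (Sum.inl 1)) := by
    rw [hg, hf0, hf1]; simp
  have hg23 : g (wedge (B (Sum.inr (Sum.inl 0))) (B (Sum.inr (Sum.inr 0))))
      = wedge (B (Sum.inr (Sum.inl 0))) (B (Sum.inr (Sum.inr 0))) := by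
    rw [hg, hf2, hf3]; simp [smul_smul, mul_inv_cancel₀ hx, inv_mul_cancel₀ hx]
  -- coordinate functionals
  have hcoord : ∀ p q : Fin 2 ⊕ (Fin 1 ⊕ Fin 1), B.coord p (B q) = if q = p then 1 else 0 := by
    intro p q
    simp [Module.Basis.coord_apply, Module.Basis.repr_self, Finsupp.single_apply]
  -- linear independence
  have hli : LinearIndependent ℂ c := by
    rw [Fintype.linearIndependent_iff]
    intro l hl
    have key : ∀ p q : Fin 2 ⊕ (Fin 1 ⊕ Fin 1),
        ∑ t, l t • (phi (B.coord p) (B.coord q)) (c t) = 0 := by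
      intro p q
      have h2 := congrArg (phi (B.coord p) (B.coord q)) hl
      simp only [map_sum, map_smul, map_zero] at h2
      exact h2
    intro t
    rcases t with t | t | t | t <;> fin_cases t
    · have k := key (Sum.inl 0) (Sum.inr (Sum.inl 0))
      simpa [hc, Fintype.sum_sum_type, Fin.sum_univ_two, hcoord, map_smul,
        mul_inv_cancel₀ hx, inv_mul_cancel₀ hx] using k
    · have k := key (Sum.inl 1) (Sum.inr (Sum.inl 0))
      have k' : l (Sum.inl 1) * x⁻¹ = 0 := by
        simpa [hc, Fintype.sum_sum_type, Fin.sum_univ_two, hcoord, map_smul] using k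
      field_simp at k'
      simpa using k'
    · have k := key (Sum.inl 0) (Sum.inr (Sum.inr 0))
      simpa [hc, Fintype.sum_sum_type, Fin.sum_univ_two, hcoord, map_smul] using k
    · have k := key (Sum.inl 1) (Sum.inr (Sum.inr 0))
      have k' : l (Sum.inr (Sum.inl 1)) * x = 0 := by
        simpa [hc, Fintype.sum_sum_type, Fin.sum_univ_two, hcoord, map_smul] using k
      exact (mul_eq_zero.mp k').resolve_right hx
    · have k := key (Sum.inl 0) (Sum.inl 1)
      simpa [hc, Fintype.sum_sum_type, Fin.sum_univ_two, hcoord, map_smul] using k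
    · have k := key (Sum.inr (Sum.inl 0)) (Sum.inr (Sum.inr 0))
      simpa [hc, Fintype.sum_sum_type, Fin.sum_univ_two, hcoord, map_smul] using k
  -- spanning
  have hcmem : ∀ t, c t ∈ Submodule.span ℂ (Set.range c) :=
    fun t => Submodule.subset_span ⟨t, rfl⟩
  have m02 : wedge (B (Sum.inl 0)) (B (Sum.inr (Sum.inl 0))) ∈ Submodule.span ℂ (Set.range c) :=
    hcmem (Sum.inl 0)
  have m03 : wedge (B (Sum.inl 0)) (B (Sum.inr (Sum.inr 0))) ∈ Submodule.span ℂ (Set.range c) :=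
    hcmem (Sum.inr (Sum.inl 0))
  have m01 : wedge (B (Sum.inl 0)) (B (Sum.inl 1)) ∈ Submodule.span ℂ (Set.range c) :=
    hcmem (Sum.inr (Sum.inr (Sum.inl 0)))
  have m23 : wedge (B (Sum.inr (Sum.inl 0))) (B (Sum.inr (Sum.inr 0))) ∈ Submodule.span ℂ (Set.range c) :=
    hcmem (Sum.inr (Sum.inr (Sum.inr 0)))
  have m12 : wedge (B (Sum.inl 1)) (B (Sum.inr (Sum.inl 0))) ∈ Submodule.span ℂ (Set.range c) := by
    have h := Submodule.smul_mem _ x (hcmem (Sum.inl 1))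
    simpa [hc, smul_smul, mul_inv_cancel₀ hx] using h
  have m13 : wedge (B (Sum.inl 1)) (B (Sum.inr (Sum.inr 0))) ∈ Submodule.span ℂ (Set.range c) := by
    have h := Submodule.smul_mem _ x⁻¹ (hcmem (Sum.inr (Sum.inl 1)))
    simpa [hc, smul_smul, inv_mul_cancel₀ hx] using h
  have hWmem : ∀ p q : Fin 2 ⊕ (Fin 1 ⊕ Fin 1),
      wedge (B p) (B q) ∈ Submodule.span ℂ (Set.range c) := by
    intro p q
    rcases p with p | p | p <;> rcases q with q | q | q <;> fin_cases p <;> fin_cases q <;>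
      first
        | (rw [wedge_self]; exact Submodule.zero_mem _)
        | exact m01 | exact m02 | exact m03 | exact m12 | exact m13 | exact m23
        | (rw [wedge_anticomm];
           first
             | exact Submodule.neg_mem _ m01 | exact Submodule.neg_mem _ m02
             | exact Submodule.neg_mem _ m03 | exact Submodule.neg_mem _ m12
             | exact Submodule.neg_mem _ m13 | exact Submodule.neg_mem _ m23)
  have hspan : ⊤ ≤ Submodule.span ℂ (Set.range c) := by
    intro z _
    have hz2 : (z : ExteriorAlgebra ℂ V) ∈
        Submodule.span ℂ (Set.range (ExteriorAlgebra.ιMulti ℂ 2 (M := V))) := by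
      rw [ExteriorAlgebra.ιMulti_span_fixedDegree]; exact z.2
    have hle : Submodule.span ℂ (Set.range (ExteriorAlgebra.ιMulti ℂ 2 (M := V))) ≤
        Submodule.map (Submodule.subtype _) (Submodule.span ℂ (Set.range c)) := by
      rw [Submodule.span_le]
      rintro _ ⟨v, rfl⟩
      have hvw : wedge (v 0) (v 1) ∈ Submodule.span ℂ (Set.range c) := by
        have hv := B.sum_repr (v 0)
        have hw := B.sum_repr (v 1)
        rw [← wedgeL_apply, ← hv, ← hw]
        simp only [map_sum, map_smul, LinearMap.sum_apply, LinearMap.smul_apply]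
        refine Submodule.sum_mem _ fun p _ => ?_
        refine Submodule.smul_mem _ _ ?_
        refine Submodule.sum_mem _ fun q _ => ?_
        refine Submodule.smul_mem _ _ ?_
        rw [wedgeL_apply]
        exact hWmem q p
      exact ⟨wedge (v 0) (v 1), hvw, by rw [Submodule.subtype_apply, wedge_val, ← ιMulti_two]⟩
    obtain ⟨y, hy, hy2⟩ := hle hz2
    have hyz : y = z := Subtype.ext hy2
    exact hyz ▸ hy
  refine ⟨Module.Basis.mk hli hspan, ?_⟩
  have hgC : g = Matrix.toLin (Module.Basis.mk hli hspan) (Module.Basis.mk hli hspan)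
      (Matrix.fromBlocks (jordanBlock x 2) 0 0
        (Matrix.fromBlocks (jordanBlock x⁻¹ 2) 0 0
          (Matrix.fromBlocks (jordanBlock 1 1) 0 0 (jordanBlock 1 1)))) := by
    refine (Module.Basis.mk hli hspan).ext fun t => ?_
    rw [Matrix.toLin_self]
    rcases t with t | t | t | t <;> fin_cases t
    · simp only [Module.Basis.mk_apply, hc, Fintype.sum_sum_type, Fin.sum_univ_two]
      simp [hg02, jordanBlock, Fintype.sum_sum_type, Fin.sum_univ_two]
    · simp only [Module.Basis.mk_apply, hc, Fintype.sum_sum_type, Fin.sum_univ_two]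
      simp [map_smul, hg12, jordanBlock, Fintype.sum_sum_type, Fin.sum_univ_two,
        smul_smul, mul_inv_cancel₀ hx, inv_mul_cancel₀ hx, smul_add]
    · simp only [Module.Basis.mk_apply, hc, Fintype.sum_sum_type, Fin.sum_univ_two]
      simp [hg03, jordanBlock, Fintype.sum_sum_type, Fin.sum_univ_two]
    · simp only [Module.Basis.mk_apply, hc, Fintype.sum_sum_type, Fin.sum_univ_two]
      simp [map_smul, hg13, jordanBlock, Fintype.sum_sum_type, Fin.sum_univ_two,
        smul_smul, mul_inv_cancel₀ hx, inv_mul_cancel₀ hx, smul_add]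
    · simp only [Module.Basis.mk_apply, hc, Fintype.sum_sum_type, Fin.sum_univ_two]
      simp [hg01, jordanBlock, Fintype.sum_sum_type, Fin.sum_univ_two]
    · simp only [Module.Basis.mk_apply, hc, Fintype.sum_sum_type, Fin.sum_univ_two]
      simp [hg23, jordanBlock, Fintype.sum_sum_type, Fin.sum_univ_two]
  rw [hgC, LinearMap.toMatrix_toLin]
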